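/- For every t >= 1, Delta_{t+1} <= (1 - 2*eta_t*K_0) * Delta_t + sigma_bar^2 * eta_t^2 - 2*eta_t * E< theta_t - theta_star, h_t - g(theta_t) >, where Delta_t := E|| theta_t - theta_star ||^2. -/
import Mathlib

open MeasureTheory Set
open scoped RealInnerProductSpace

/-- one-step progress inequality for projected stochastic
approximation. -/
theorem stmt9
    {Ω : Type*} {m0 : MeasurableSpace Ω} (μ : Measure Ω) [IsProbabilityMeasure μ]
    {d : ℕ}
    (Θ : Set (EuclideanSpace ℝ (Fin d)))
    (hΘne : Θ.Nonempty) (hΘclosed : IsClosed Θ) (hΘconv : Convex ℝ Θ)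
    (CΘ : ℝ) (hΘsub : Θ ⊆ Metric.closedBall 0 CΘ)
    -- the metric projection onto Θ
    (proj : EuclideanSpace ℝ (Fin d) → EuclideanSpace ℝ (Fin d))
    (hproj : ∀ z, proj z ∈ Θ ∧ ∀ u ∈ Θ, ‖z - proj z‖ ≤ ‖z - u‖)
    (θstar : EuclideanSpace ℝ (Fin d)) (hθstar : θstar ∈ Θ)
    (g : EuclideanSpace ℝ (Fin d) → EuclideanSpace ℝ (Fin d))
    (hgmeas : Measurable g)
    (K0 K1 : ℝ) (hK0 : 0 < K0) (hK1 : 0 < K1)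
    (hmono : ∀ θ ∈ Θ, K0 * ‖θ - θstar‖ ^ 2 ≤ ⟪θ - θstar, g θ⟫)
    (hgrowth : ∀ θ ∈ Θ, ‖g θ‖ ≤ K1 * ‖θ - θstar‖)
    (σb : ℝ)
    (h : ℕ → Ω → EuclideanSpace ℝ (Fin d))
    (hhmeas : ∀ t, Measurable (h t))
    (hhint : ∀ t, 1 ≤ t → Integrable (fun ω => ‖h t ω‖ ^ 2) μ)
    (hhmom : ∀ t, 1 ≤ t → (∫ ω, ‖h t ω‖ ^ 2 ∂μ) ≤ σb ^ 2)
    (η : ℕ → ℝ) (hη : ∀ t, 1 ≤ t → 0 < η t)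
    (θ : ℕ → Ω → EuclideanSpace ℝ (Fin d))
    (hθmeas : ∀ t, Measurable (θ t))
    (hθ1 : ∀ ω, θ 1 ω ∈ Θ)
    (hrec : ∀ t, 1 ≤ t → ∀ ω, θ (t + 1) ω = proj (θ t ω - η t • h t ω)) :
    ∀ t, 1 ≤ t →
      (∫ ω, ‖θ (t + 1) ω - θstar‖ ^ 2 ∂μ) ≤
        (1 - 2 * η t * K0) * (∫ ω, ‖θ t ω - θstar‖ ^ 2 ∂μ)
          + σb ^ 2 * η t ^ 2
          - 2 * η t * ∫ ω, (⟪θ t ω - θstar, h t ω - g (θ t ω)⟫ : ℝ) ∂μ := by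
  intro t ht
  -- CΘ is nonneg
  have hCnn : 0 ≤ CΘ := by
    obtain ⟨x, hx⟩ := hΘne
    have := hΘsub hx
    rw [Metric.mem_closedBall, dist_zero_right] at this
    exact le_trans (norm_nonneg _) this
  -- iterates stay in Θ
  have hmem : ∀ s, 1 ≤ s → ∀ ω, θ s ω ∈ Θ := by
    intro s hs
    induction s with
    | zero => omega
    | succ n ih =>
      intro ω
      by_cases hn : 1 ≤ n
      · rw [hrec n hn ω]; exact (hproj _).1
      · have : n = 0 := by omega
        subst this; exact hθ1 ω
  -- bound on distance to θstar for points of Θ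
  have hbd : ∀ x ∈ Θ, ‖x - θstar‖ ≤ 2 * CΘ := by
    intro x hx
    have h1 := hΘsub hx
    have h2 := hΘsub hθstar
    rw [Metric.mem_closedBall, dist_zero_right] at h1 h2
    calc ‖x - θstar‖ ≤ ‖x‖ + ‖θstar‖ := norm_sub_le _ _
      _ ≤ 2 * CΘ := by linarith
  -- projection does not increase distance to θstar
  have hne : ∀ z : EuclideanSpace ℝ (Fin d), ‖proj z - θstar‖ ^ 2 ≤ ‖z - θstar‖ ^ 2 := by
    intro z
    haveI : Nonempty Θ := ⟨⟨θstar, hθstar⟩⟩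
    have hmin : ‖z - proj z‖ = ⨅ w : Θ, ‖z - (w : EuclideanSpace ℝ (Fin d))‖ := by
      apply le_antisymm
      · exact le_ciInf fun w => (hproj z).2 w w.2
      · exact ciInf_le ⟨0, by rintro x ⟨w, rfl⟩; exact norm_nonneg _⟩
          (⟨proj z, (hproj z).1⟩ : Θ)
    have hvar := (norm_eq_iInf_iff_real_inner_le_zero hΘconv (hproj z).1).mp hmin θstar hθstar
    have hinner : (0:ℝ) ≤ ⟪z - proj z, proj z - θstar⟫ := by
      have : (proj z - θstar) = -(θstar - proj z) := by abel
      rw [this, inner_neg_right]; linarith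
    have hexp : ‖z - θstar‖ ^ 2
        = ‖z - proj z‖ ^ 2 + 2 * ⟪z - proj z, proj z - θstar⟫ + ‖proj z - θstar‖ ^ 2 := by
      have : z - θstar = (z - proj z) + (proj z - θstar) := by abel
      rw [this, norm_add_sq_real]
    nlinarith [sq_nonneg ‖z - proj z‖]
  have hηpos := hη t ht
  -- pointwise key inequality
  have key : ∀ ω, ‖θ (t + 1) ω - θstar‖ ^ 2 ≤
      (1 - 2 * η t * K0) * ‖θ t ω - θstar‖ ^ 2 + η t ^ 2 * ‖h t ω‖ ^ 2
        - 2 * η t * ⟪θ t ω - θstar, h t ω - g (θ t ω)⟫ := by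
    intro ω
    have hθt := hmem t ht ω
    have h1 : ‖θ (t + 1) ω - θstar‖ ^ 2 ≤ ‖(θ t ω - θstar) - η t • h t ω‖ ^ 2 := by
      rw [hrec t ht ω]
      have : θ t ω - η t • h t ω - θstar = (θ t ω - θstar) - η t • h t ω := by abel
      rw [← this]; exact hne _
    have hexp : ‖(θ t ω - θstar) - η t • h t ω‖ ^ 2
        = ‖θ t ω - θstar‖ ^ 2 - 2 * (η t * ⟪θ t ω - θstar, h t ω⟫)
          + η t ^ 2 * ‖h t ω‖ ^ 2 := by
      rw [norm_sub_sq_real, real_inner_smul_right, norm_smul, mul_pow,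
        Real.norm_eq_abs, sq_abs]
    rw [hexp] at h1
    have hsplit : (⟪θ t ω - θstar, h t ω⟫ : ℝ)
        = ⟪θ t ω - θstar, g (θ t ω)⟫ + ⟪θ t ω - θstar, h t ω - g (θ t ω)⟫ := by
      rw [inner_sub_right]; ring
    have hm := hmono _ hθt
    have hcomb : K0 * ‖θ t ω - θstar‖ ^ 2 + ⟪θ t ω - θstar, h t ω - g (θ t ω)⟫
        ≤ ⟪θ t ω - θstar, h t ω⟫ := by
      rw [hsplit]; linarith
    have := mul_le_mul_of_nonneg_left hcomb (by linarith : (0:ℝ) ≤ 2 * η t)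
    nlinarith
  -- measurability facts
  have hmeasa : ∀ s, Measurable (fun ω => ‖θ s ω - θstar‖ ^ 2) :=
    fun s => (((hθmeas s).sub measurable_const).norm).pow_const 2
  have hmeasi : Measurable (fun ω => (⟪θ t ω - θstar, h t ω - g (θ t ω)⟫ : ℝ)) :=
    Measurable.inner ((hθmeas t).sub measurable_const)
      ((hhmeas t).sub (hgmeas.comp (hθmeas t)))
  -- integrability
  have hinta : ∀ s, 1 ≤ s → Integrable (fun ω => ‖θ s ω - θstar‖ ^ 2) μ := by
    intro s hs
    refine Integrable.mono' (integrable_const ((2 * CΘ) ^ 2))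
      (hmeasa s).aestronglyMeasurable (ae_of_all _ fun ω => ?_)
    rw [Real.norm_eq_abs, abs_of_nonneg (sq_nonneg _)]
    exact pow_le_pow_left₀ (norm_nonneg _) (hbd _ (hmem s hs ω)) 2
  have hintnh : Integrable (fun ω => ‖h t ω‖) μ := by
    refine Integrable.mono' ((hhint t ht).add (integrable_const 1))
      ((hhmeas t).norm.aestronglyMeasurable) (ae_of_all _ fun ω => ?_)
    simp only [Pi.add_apply]
    rw [Real.norm_eq_abs, abs_of_nonneg (norm_nonneg _)]
    nlinarith [norm_nonneg (h t ω), sq_nonneg (‖h t ω‖ - 1)]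
  have hinti : Integrable (fun ω => (⟪θ t ω - θstar, h t ω - g (θ t ω)⟫ : ℝ)) μ := by
    refine Integrable.mono'
      ((hintnh.const_mul (2 * CΘ)).add (integrable_const (2 * CΘ * (K1 * (2 * CΘ)))))
      hmeasi.aestronglyMeasurable (ae_of_all _ fun ω => ?_)
    have hθt := hmem t ht ω
    have h1 : ‖h t ω - g (θ t ω)‖ ≤ ‖h t ω‖ + K1 * (2 * CΘ) := by
      have := hgrowth _ hθt
      have h2 : K1 * ‖θ t ω - θstar‖ ≤ K1 * (2 * CΘ) :=
        mul_le_mul_of_nonneg_left (hbd _ hθt) (le_of_lt hK1)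
      calc ‖h t ω - g (θ t ω)‖ ≤ ‖h t ω‖ + ‖g (θ t ω)‖ := norm_sub_le _ _
        _ ≤ ‖h t ω‖ + K1 * (2 * CΘ) := by linarith
    calc ‖(⟪θ t ω - θstar, h t ω - g (θ t ω)⟫ : ℝ)‖
        ≤ ‖θ t ω - θstar‖ * ‖h t ω - g (θ t ω)‖ := by
          rw [Real.norm_eq_abs]; exact abs_real_inner_le_norm _ _
      _ ≤ (2 * CΘ) * (‖h t ω‖ + K1 * (2 * CΘ)) := by
          apply mul_le_mul (hbd _ hθt) h1 (norm_nonneg _) (by linarith)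
      _ = 2 * CΘ * ‖h t ω‖ + 2 * CΘ * (K1 * (2 * CΘ)) := by ring
  -- integrate the pointwise inequality
  have hA : Integrable (fun ω => (1 - 2 * η t * K0) * ‖θ t ω - θstar‖ ^ 2
      + η t ^ 2 * ‖h t ω‖ ^ 2) μ :=
    ((hinta t ht).const_mul _).add ((hhint t ht).const_mul _)
  have hA1 : Integrable (fun ω => (1 - 2 * η t * K0) * ‖θ t ω - θstar‖ ^ 2) μ :=
    (hinta t ht).const_mul _
  have hA2 : Integrable (fun ω => η t ^ 2 * ‖h t ω‖ ^ 2) μ := (hhint t ht).const_mul _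
  have hA3 : Integrable (fun ω => 2 * η t * (⟪θ t ω - θstar, h t ω - g (θ t ω)⟫ : ℝ)) μ :=
    hinti.const_mul _
  have hintRHS : Integrable (fun ω => (1 - 2 * η t * K0) * ‖θ t ω - θstar‖ ^ 2
      + η t ^ 2 * ‖h t ω‖ ^ 2 - 2 * η t * ⟪θ t ω - θstar, h t ω - g (θ t ω)⟫) μ :=
    hA.sub hA3
  have hmain := integral_mono (hinta (t + 1) (by omega)) hintRHS key
  have hsplit : (∫ ω, ((1 - 2 * η t * K0) * ‖θ t ω - θstar‖ ^ 2
        + η t ^ 2 * ‖h t ω‖ ^ 2 - 2 * η t * ⟪θ t ω - θstar, h t ω - g (θ t ω)⟫) ∂μ)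
      = (1 - 2 * η t * K0) * (∫ ω, ‖θ t ω - θstar‖ ^ 2 ∂μ)
        + η t ^ 2 * (∫ ω, ‖h t ω‖ ^ 2 ∂μ)
        - 2 * η t * ∫ ω, (⟪θ t ω - θstar, h t ω - g (θ t ω)⟫ : ℝ) ∂μ := by
    rw [integral_sub hA hA3, integral_add hA1 hA2,
      integral_const_mul, integral_const_mul, integral_const_mul]
  rw [hsplit] at hmain
  have hb : η t ^ 2 * (∫ ω, ‖h t ω‖ ^ 2 ∂μ) ≤ σb ^ 2 * η t ^ 2 := by
    have := hhmom t ht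
    nlinarith [sq_nonneg (η t)]
  linarith
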